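/- Let α(I) = I²·sinh(π(I−1)/2)/((I−1)²·sinh(πI/2)) and let μ ≠ 0. If 1/|μ| < e^{π/2}, then there exists a unique I_l ∈ (−∞,0) with α(I_l) = 1/|μ|, and α(I) > 1/|μ| for all I ∈ (−∞, I_l) while α(I) < 1/|μ| for all I ∈ (I_l, 0). If instead 1/|μ| ≥ e^{π/2}, then α(I) < 1/|μ| for all I < 0. -/

import Mathlib

open Real

/-- `α(I) = I² sinh(π(I-1)/2) / ((I-1)² sinh(πI/2))`. -/
noncomputable def alphaFn (I : ℝ) : ℝ :=
  I ^ 2 * Real.sinh (π * (I - 1) / 2) / ((I - 1) ^ 2 * Real.sinh (π * I / 2))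

lemma sinh_le_mul_cosh {b : ℝ} (hb : 0 ≤ b) : Real.sinh b ≤ b * Real.cosh b := by
  have hmono : MonotoneOn (fun x => x * Real.cosh x - Real.sinh x) (Set.Ici 0) := by
    have hd : ∀ x : ℝ, HasDerivAt (fun x => x * Real.cosh x - Real.sinh x)
        (x * Real.sinh x) x := by
      intro x
      have h := ((hasDerivAt_id x).mul (Real.hasDerivAt_cosh x)).sub (Real.hasDerivAt_sinh x)
      convert h using 1; rfl; rfl; rfl
      simp [id_eq]
      try ring
    apply monotoneOn_of_deriv_nonneg (convex_Ici 0)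
    · exact fun x _ => ((hd x).continuousAt).continuousWithinAt
    · exact fun x _ => ((hd x).differentiableAt).differentiableWithinAt
    · intro x hx
      rw [interior_Ici, Set.mem_Ioi] at hx
      rw [(hd x).deriv]
      positivity
  have h0 : (0:ℝ) ∈ Set.Ici (0:ℝ) := Set.self_mem_Ici
  have hb' : b ∈ Set.Ici (0:ℝ) := hb
  have := hmono h0 hb' hb
  simpa using this

lemma mul_sinh_le {b v : ℝ} (hb : 0 < b) (hbv : b ≤ v) :
    v * Real.sinh b ≤ b * Real.sinh v := by
  have hmono : MonotoneOn (fun x => b * Real.sinh x - x * Real.sinh b) (Set.Ici b) := by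
    have hd : ∀ x : ℝ, HasDerivAt (fun x => b * Real.sinh x - x * Real.sinh b)
        (b * Real.cosh x - Real.sinh b) x := by
      intro x
      have h := ((Real.hasDerivAt_sinh x).const_mul b).sub
        ((hasDerivAt_id x).mul_const (Real.sinh b))
      convert h using 1; rfl; rfl; rfl
      simp [id_eq]
      try ring
    apply monotoneOn_of_deriv_nonneg (convex_Ici b)
    · exact fun x _ => ((hd x).continuousAt).continuousWithinAt
    · exact fun x _ => ((hd x).differentiableAt).differentiableWithinAt
    · intro x hx
      rw [interior_Ici, Set.mem_Ioi] at hx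
      rw [(hd x).deriv]
      have hcosh : Real.cosh b ≤ Real.cosh x := by
        rw [Real.cosh_le_cosh]
        rw [abs_of_pos hb, abs_of_pos (hb.trans hx)]
        exact hx.le
      have h1 : Real.sinh b ≤ b * Real.cosh b := sinh_le_mul_cosh hb.le
      nlinarith
  have := hmono Set.self_mem_Ici (show v ∈ Set.Ici b from hbv) hbv
  simp only [sub_self] at this ⊢
  linarith [this]

lemma key_ineq {I : ℝ} (hI : I < 0) :
    π/2 * (I*(I-1)) * Real.sinh (π/2) < 2 * Real.sinh (π*(I-1)/2) * Real.sinh (π*I/2) := by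
  have hI' : 0 < -I := by linarith
  set u : ℝ := π * (-I) / 2 with hu_def
  set v : ℝ := π * (1 - I) / 2 with hv_def
  have hu : 0 < u := by positivity
  have hv : π/2 < v := by rw [hv_def]; nlinarith [pi_pos]
  have h1 : u < Real.sinh u := Real.self_lt_sinh_iff.2 hu
  have h2 : v * Real.sinh (π/2) ≤ π/2 * Real.sinh v := mul_sinh_le (by positivity) hv.le
  have hsv : 0 < Real.sinh v := Real.sinh_pos_iff.2 (by nlinarith [pi_pos])
  have hs : 0 < Real.sinh (π/2) := Real.sinh_pos_iff.2 (by positivity)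
  have hsA : Real.sinh (π*(I-1)/2) = -Real.sinh v := by
    rw [show π*(I-1)/2 = -v by rw [hv_def]; ring, Real.sinh_neg]
  have hsB : Real.sinh (π*I/2) = -Real.sinh u := by
    rw [show π*I/2 = -u by rw [hu_def]; ring, Real.sinh_neg]
  have hprod : I*(I-1) = 4*u*v/π^2 := by
    rw [hu_def, hv_def]; field_simp; ring
  have main : 2*u*v*Real.sinh (π/2) < π * (2 * Real.sinh v * Real.sinh u) := by
    nlinarith [mul_pos hu hsv, mul_pos hsv hs, mul_pos hu hs,
      mul_lt_mul_of_pos_left h1 (mul_pos hsv (by positivity : (0:ℝ) < 2)),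
      mul_le_mul_of_nonneg_left h2 (le_of_lt (mul_pos hu hs)), pi_pos]
  rw [hsA, hsB]
  have heq : π/2*(I*(I-1))*Real.sinh (π/2) = 2*u*v*Real.sinh (π/2)/π := by
    rw [hprod]; field_simp; ring
  rw [heq, div_lt_iff₀ pi_pos]
  nlinarith [main]

lemma alphaFn_hasDerivAt {I : ℝ} (hI : I < 0) : ∃ d, HasDerivAt alphaFn d I ∧ d < 0 := by
  have hI1 : I - 1 < 0 := by linarith
  have hsB_neg : Real.sinh (π * I / 2) < 0 := Real.sinh_neg_iff.2 (by nlinarith [pi_pos])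
  have hD_neg : (I - 1) ^ 2 * Real.sinh (π * I / 2) < 0 :=
    mul_neg_of_pos_of_neg (by nlinarith) hsB_neg
  have hA : HasDerivAt (fun I : ℝ => π*(I-1)/2) (π/2) I := by
    have h := (((hasDerivAt_id I).sub_const 1).const_mul π).div_const 2
    (convert h using 1; rfl; rfl; rfl) <;> simp [id_eq] <;> try ring
  have hB : HasDerivAt (fun I : ℝ => π*I/2) (π/2) I := by
    have h := ((hasDerivAt_id I).const_mul π).div_const 2
    (convert h using 1; rfl; rfl; rfl) <;> simp [id_eq] <;> try ring
  have hN : HasDerivAt (fun I : ℝ => I ^ 2 * Real.sinh (π*(I-1)/2))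
      (2*I * Real.sinh (π*(I-1)/2) + I^2 * (Real.cosh (π*(I-1)/2) * (π/2))) I := by
    have h := (hasDerivAt_pow 2 I).mul ((Real.hasDerivAt_sinh (π*(I-1)/2)).comp I hA)
    (convert h using 1; rfl; rfl; rfl) <;> simp only [Function.comp] <;> push_cast <;> try ring
  have hD : HasDerivAt (fun I : ℝ => (I-1) ^ 2 * Real.sinh (π*I/2))
      (2*(I-1) * Real.sinh (π*I/2) + (I-1)^2 * (Real.cosh (π*I/2) * (π/2))) I := by
    have hp : HasDerivAt (fun I : ℝ => (I-1)^2) (2*(I-1)) I := by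
      have h := ((hasDerivAt_id I).sub_const 1).pow 2
      (convert h using 1; rfl; rfl; rfl) <;> push_cast <;> simp [id_eq] <;> try ring
    have h := hp.mul ((Real.hasDerivAt_sinh (π*I/2)).comp I hB)
    (convert h using 1; rfl; rfl; rfl) <;> simp only [Function.comp] <;> push_cast <;> try ring
  have hq := hN.div hD (ne_of_lt hD_neg)
  refine ⟨_, hq, ?_⟩
  apply div_neg_of_neg_of_pos
  · have hsub : Real.sinh (π*I/2) * Real.cosh (π*(I-1)/2)
        - Real.cosh (π*I/2) * Real.sinh (π*(I-1)/2) = Real.sinh (π/2) := by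
      rw [← Real.sinh_sub]; congr 1; ring
    have hnum : (2*I * Real.sinh (π*(I-1)/2) + I^2 * (Real.cosh (π*(I-1)/2) * (π/2)))
          * ((I-1) ^ 2 * Real.sinh (π*I/2))
        - (I ^ 2 * Real.sinh (π*(I-1)/2))
          * (2*(I-1) * Real.sinh (π*I/2) + (I-1)^2 * (Real.cosh (π*I/2) * (π/2)))
        = I*(I-1) * (π/2*(I*(I-1))*(Real.sinh (π*I/2) * Real.cosh (π*(I-1)/2)
            - Real.cosh (π*I/2) * Real.sinh (π*(I-1)/2))
          - 2 * Real.sinh (π*(I-1)/2) * Real.sinh (π*I/2)) := by ring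
    rw [hnum, hsub]
    exact mul_neg_of_pos_of_neg (mul_pos_of_neg_of_neg hI hI1)
      (by linarith [key_ineq hI])
  · exact pow_two_pos_of_ne_zero (ne_of_lt hD_neg)

lemma alphaFn_contOn : ContinuousOn alphaFn (Set.Iio 0) := by
  intro I hI
  obtain ⟨d, hd, _⟩ := alphaFn_hasDerivAt (Set.mem_Iio.1 hI)
  exact hd.differentiableAt.continuousAt.continuousWithinAt

lemma alphaFn_strictAnti : StrictAntiOn alphaFn (Set.Iio 0) := by
  apply strictAntiOn_of_deriv_neg (convex_Iio 0) alphaFn_contOn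
  intro x hx
  rw [interior_Iio] at hx
  obtain ⟨d, hd, hneg⟩ := alphaFn_hasDerivAt (Set.mem_Iio.1 hx)
  rwa [hd.deriv]

lemma alphaFn_eq {I : ℝ} (hI : I < 0) :
    alphaFn I = (I/(I-1))^2 *
      (Real.exp (π/2) * ((1 - Real.exp (π*(I-1)))/(1 - Real.exp (π*I)))) := by
  have hI1 : I - 1 ≠ 0 := by intro h; nlinarith
  have hx : (0:ℝ) < Real.exp (π*(I-1)/2) := Real.exp_pos _
  have hy : (0:ℝ) < Real.exp (π*I/2) := Real.exp_pos _
  have hy1 : Real.exp (π*I/2) < 1 := Real.exp_lt_one_iff.2 (by nlinarith [pi_pos])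
  have hx1 : Real.exp (π*(I-1)/2) < 1 := Real.exp_lt_one_iff.2 (by nlinarith [pi_pos])
  have hA2 : Real.exp (π*(I-1)) = Real.exp (π*(I-1)/2) * Real.exp (π*(I-1)/2) := by
    rw [← Real.exp_add]; congr 1; ring
  have hB2 : Real.exp (π*I) = Real.exp (π*I/2) * Real.exp (π*I/2) := by
    rw [← Real.exp_add]; congr 1; ring
  have hC : Real.exp (π/2) = Real.exp (π*I/2) / Real.exp (π*(I-1)/2) := by
    rw [← Real.exp_sub]; congr 1; ring
  have hyy : 1 - Real.exp (π*I/2) * Real.exp (π*I/2) ≠ 0 := by nlinarith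
  have hd : Real.exp (π*I/2) - (Real.exp (π*I/2))⁻¹ ≠ 0 := by
    have : 1 < (Real.exp (π*I/2))⁻¹ := (one_lt_inv₀ hy).2 hy1
    nlinarith
  rw [alphaFn, Real.sinh_eq, Real.sinh_eq, Real.exp_neg, Real.exp_neg, hA2, hB2, hC]
  set x := Real.exp (π*(I-1)/2) with hx_def
  set y := Real.exp (π*I/2) with hy_def
  have hdy : y - y⁻¹ ≠ 0 := hd
  have hy0 : y ≠ 0 := hy.ne'
  have hx0 : x ≠ 0 := hx.ne'
  have hD0 : (I-1)^2 * ((y - y⁻¹)/2) ≠ 0 := by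
    exact mul_ne_zero (pow_ne_zero 2 hI1) (div_ne_zero hdy two_ne_zero)
  rw [div_eq_iff hD0]
  field_simp
  rw [eq_div_iff (by rw [sq]; exact hyy)]
  ring

lemma alphaFn_lt_exp {I : ℝ} (hI : I < 0) : alphaFn I < Real.exp (π/2) := by
  rw [alphaFn_eq hI]
  set P := Real.exp (π*(I-1)) with hP_def
  set Q := Real.exp (π*I) with hQ_def
  have hI1 : I - 1 ≠ 0 := by intro h; nlinarith
  have hP : 0 < P := Real.exp_pos _
  have hQ : 0 < Q := Real.exp_pos _
  have hQ1 : Q < 1 := Real.exp_lt_one_iff.2 (by nlinarith [pi_pos])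
  have hQle : Q * (1 + π * (-I)) ≤ 1 := by
    have h := Real.add_one_le_exp (π * (-I))
    have he : Real.exp (π * (-I)) = Q⁻¹ := by
      rw [hQ_def, ← Real.exp_neg]; congr 1; ring
    rw [he] at h
    calc Q * (1 + π * (-I)) ≤ Q * Q⁻¹ := by
          apply mul_le_mul_of_nonneg_left (by linarith) hQ.le
      _ = 1 := mul_inv_cancel₀ hQ.ne'
  have hπt : 0 < 1 + π * (-I) := by nlinarith [pi_pos]
  have hI2 : 0 < I^2 := by nlinarith
  have key : I^2*(1-P) < (I-1)^2*(1-Q) := by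
    have h1 : (I-1)^2 * (Q * (1 + π * (-I))) ≤ (I-1)^2 * 1 :=
      mul_le_mul_of_nonneg_left hQle (sq_nonneg (I-1))
    have h2 : 0 < I^2 * P := mul_pos hI2 hP
    nlinarith [mul_pos h2 hπt, Real.pi_gt_three, mul_pos hI2 hπt]
  have h1Q : 0 < 1 - Q := by linarith
  have hden : 0 < (I-1)^2*(1-Q) := by positivity
  have heq : (I/(I-1))^2 * (Real.exp (π/2) * ((1-P)/(1-Q)))
      = Real.exp (π/2) * ((I^2*(1-P))/((I-1)^2*(1-Q))) := by
    field_simp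
  rw [heq]
  calc Real.exp (π/2) * ((I^2*(1-P))/((I-1)^2*(1-Q)))
      < Real.exp (π/2) * 1 :=
        mul_lt_mul_of_pos_left ((div_lt_one hden).2 key) (Real.exp_pos _)
    _ = Real.exp (π/2) := mul_one _

lemma alphaFn_le_near_zero {I : ℝ} (h1 : -1 < I) (h0 : I < 0) :
    alphaFn I ≤ 2 * Real.sinh π / π * (-I) := by
  have hsB_neg : Real.sinh (π * I / 2) < 0 := Real.sinh_neg_iff.2 (by nlinarith [pi_pos])
  have hD_neg : (I - 1) ^ 2 * Real.sinh (π * I / 2) < 0 :=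
    mul_neg_of_pos_of_neg (by nlinarith) hsB_neg
  rw [alphaFn, div_le_iff_of_neg hD_neg]
  have heq : 2 * Real.sinh π / π * (-I) * ((I - 1) ^ 2 * Real.sinh (π * I / 2))
      = 2 * Real.sinh π * (-I) * ((I - 1) ^ 2 * Real.sinh (π * I / 2)) / π := by ring
  rw [heq, div_le_iff₀ pi_pos]
  have hs1 : Real.sinh (π*I/2) ≤ π*I/2 := Real.sinh_le_self_iff.2 (by nlinarith [pi_pos])
  have hs2 : -Real.sinh π ≤ Real.sinh (π*(I-1)/2) := by
    rw [← Real.sinh_neg]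
    exact Real.sinh_le_sinh.2 (by nlinarith [pi_pos])
  have hI1sq : 1 ≤ (I-1)^2 := by nlinarith
  have hsπ : 0 < Real.sinh π := Real.sinh_pos_iff.2 pi_pos
  have hnegI : 0 ≤ -I := by linarith
  have hpos : 0 ≤ 2 * Real.sinh π * (-I) := by positivity
  have h3 : (I-1)^2 * Real.sinh (π*I/2) ≤ Real.sinh (π*I/2) := by nlinarith
  have h4 := mul_le_mul_of_nonneg_left h3 hpos
  have h5 := mul_le_mul_of_nonneg_left hs1 hpos
  have h6 : -(Real.sinh π) * I^2 * π ≤ I ^ 2 * Real.sinh (π * (I - 1) / 2) * π := by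
    nlinarith [mul_le_mul_of_nonneg_right hs2 (mul_nonneg (sq_nonneg I) pi_pos.le)]
  have h7 : 2*Real.sinh π*(-I)*(π*I/2) = -Real.sinh π * I^2 * π := by ring
  linarith [h4, h5, h6, h7]

lemma alphaFn_tendsto_atBot :
    Filter.Tendsto alphaFn Filter.atBot (nhds (Real.exp (π/2))) := by
  have hb : Filter.Tendsto (fun I : ℝ => I - 1) Filter.atBot Filter.atBot := by
    simpa [sub_eq_add_neg] using Filter.tendsto_atBot_add_const_right Filter.atBot (-1)
      (Filter.tendsto_id (α := ℝ))
  have h1I : Filter.Tendsto (fun I : ℝ => 1 - I) Filter.atBot Filter.atTop := by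
    have := Filter.tendsto_neg_atBot_atTop (G := ℝ)
    have h2 := Filter.tendsto_atTop_add_const_left Filter.atBot (1:ℝ) this
    simpa [sub_eq_add_neg] using h2
  have hinv : Filter.Tendsto (fun I : ℝ => (I - 1)⁻¹) Filter.atBot (nhds 0) := by
    have h := h1I.inv_tendsto_atTop.neg
    rw [neg_zero] at h
    apply h.congr
    intro I
    show -(1 - I)⁻¹ = (I - 1)⁻¹
    rw [show (I - 1) = -(1 - I) by ring, inv_neg]
  have t0 : Filter.Tendsto (fun I : ℝ => I / (I - 1)) Filter.atBot (nhds 1) := by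
    have t : Filter.Tendsto (fun I : ℝ => 1 + (I - 1)⁻¹) Filter.atBot (nhds (1 + 0)) :=
      tendsto_const_nhds.add hinv
    rw [add_zero] at t
    apply t.congr'
    filter_upwards [Filter.eventually_lt_atBot (0:ℝ)] with I hI
    have : I - 1 ≠ 0 := by intro h; nlinarith
    field_simp
    ring
  have t2 : Filter.Tendsto (fun I : ℝ => Real.exp (π*(I-1))) Filter.atBot (nhds 0) :=
    Real.tendsto_exp_atBot.comp (hb.const_mul_atBot pi_pos)
  have t3 : Filter.Tendsto (fun I : ℝ => Real.exp (π*I)) Filter.atBot (nhds 0) :=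
    Real.tendsto_exp_atBot.comp ((Filter.tendsto_id (α := ℝ)).const_mul_atBot pi_pos)
  have T : Filter.Tendsto (fun I : ℝ => (I/(I-1))^2 *
      (Real.exp (π/2) * ((1 - Real.exp (π*(I-1)))/(1 - Real.exp (π*I)))))
      Filter.atBot (nhds ((1:ℝ)^2 * (Real.exp (π/2) * ((1-0)/(1-0))))) :=
    (t0.pow 2).mul (tendsto_const_nhds.mul
      ((tendsto_const_nhds.sub t2).div (tendsto_const_nhds.sub t3) (by norm_num)))
  have hval : ((1:ℝ)^2 * (Real.exp (π/2) * ((1-0)/(1-0)))) = Real.exp (π/2) := by norm_num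
  rw [hval] at T
  apply T.congr'
  filter_upwards [Filter.eventually_lt_atBot (0:ℝ)] with I hI
  exact (alphaFn_eq hI).symm

/-- Bifurcation value on `(-∞, 0)`: if `1/|μ| < e^{π/2}` there is a unique
`I_l < 0` with `α(I_l) = 1/|μ|`, with `α > 1/|μ|` on `(-∞, I_l)` and `α < 1/|μ|`
on `(I_l, 0)`; if `1/|μ| ≥ e^{π/2}` then `α < 1/|μ|` on all of `(-∞, 0)`. -/
theorem alphaFn_bifurcation_neg (μ : ℝ) (hμ : μ ≠ 0) :
    (1 / |μ| < Real.exp (π / 2) →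
      ∃ Il : ℝ, Il < 0 ∧ alphaFn Il = 1 / |μ| ∧
        (∀ I : ℝ, I < 0 → alphaFn I = 1 / |μ| → I = Il) ∧
        (∀ I : ℝ, I < Il → 1 / |μ| < alphaFn I) ∧
        (∀ I ∈ Set.Ioo Il 0, alphaFn I < 1 / |μ|)) ∧
    (Real.exp (π / 2) ≤ 1 / |μ| → ∀ I : ℝ, I < 0 → alphaFn I < 1 / |μ|) := by
  have hc : 0 < 1 / |μ| := by
    have : 0 < |μ| := abs_pos.2 hμ
    positivity
  constructor
  · intro h
    have hev : ∀ᶠ I in Filter.atBot, 1 / |μ| < alphaFn I :=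
      alphaFn_tendsto_atBot.eventually (eventually_gt_nhds h)
    obtain ⟨I₀, hI₀c, hI₀0⟩ := (hev.and (Filter.eventually_lt_atBot (0:ℝ))).exists
    have hsπ : 0 < Real.sinh π := Real.sinh_pos_iff.2 pi_pos
    set ε := min (1/2 : ℝ) (π * (1/|μ|) / (4 * (Real.sinh π + 1))) with hε_def
    have hε_pos : 0 < ε := lt_min (by norm_num) (by positivity)
    have hε_le : ε ≤ 1/2 := min_le_left _ _
    set I₁ := max (I₀/2) (-ε) with hI₁_def
    have hI₁_neg : I₁ < 0 := max_lt (by linarith) (by linarith)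
    have hI₀I₁ : I₀ < I₁ := lt_of_lt_of_le (by linarith) (le_max_left _ _)
    have hI₁_gt : -1 < I₁ := lt_of_lt_of_le (by linarith) (le_max_right _ _)
    have hαI₁ : alphaFn I₁ < 1 / |μ| := by
      have hb := alphaFn_le_near_zero hI₁_gt hI₁_neg
      have hK : 0 ≤ 2 * Real.sinh π / π := by positivity
      have h1 : -I₁ ≤ ε := by
        have := le_max_right (I₀/2) (-ε); linarith
      have h2 : ε ≤ π * (1/|μ|) / (4 * (Real.sinh π + 1)) := min_le_right _ _
      have step1 : alphaFn I₁ ≤ 2 * Real.sinh π / π * ε :=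
        hb.trans (mul_le_mul_of_nonneg_left h1 hK)
      have step2 : 2 * Real.sinh π / π * ε
          ≤ 2 * Real.sinh π / π * (π * (1/|μ|) / (4 * (Real.sinh π + 1))) :=
        mul_le_mul_of_nonneg_left h2 hK
      have heqv : 2 * Real.sinh π / π * (π * (1/|μ|) / (4 * (Real.sinh π + 1)))
          = (1/|μ|) * (Real.sinh π / (2 * (Real.sinh π + 1))) := by
        field_simp
        ring
      have hfrac : Real.sinh π / (2 * (Real.sinh π + 1)) < 1 := by
        rw [div_lt_one (by positivity)]; linarith
      have hlt : (1/|μ|) * (Real.sinh π / (2 * (Real.sinh π + 1))) < 1/|μ| := by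
        nlinarith [hc]
      calc alphaFn I₁ ≤ 2 * Real.sinh π / π * ε := step1
        _ ≤ 2 * Real.sinh π / π * (π * (1/|μ|) / (4 * (Real.sinh π + 1))) := step2
        _ = (1/|μ|) * (Real.sinh π / (2 * (Real.sinh π + 1))) := heqv
        _ < 1/|μ| := hlt
    have hsub : Set.Icc I₀ I₁ ⊆ Set.Iio 0 := fun x hx => lt_of_le_of_lt hx.2 hI₁_neg
    have hivt := intermediate_value_Icc' hI₀I₁.le (alphaFn_contOn.mono hsub)
    have hcmem : 1/|μ| ∈ Set.Icc (alphaFn I₁) (alphaFn I₀) := ⟨hαI₁.le, hI₀c.le⟩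
    obtain ⟨Il, hIlmem, hIlval⟩ := hivt hcmem
    have hIl0 : Il < 0 := lt_of_le_of_lt hIlmem.2 hI₁_neg
    refine ⟨Il, hIl0, hIlval, ?_, ?_, ?_⟩
    · intro I hI hval
      exact alphaFn_strictAnti.injOn (Set.mem_Iio.2 hI) (Set.mem_Iio.2 hIl0)
        (by rw [hval, hIlval])
    · intro I hIlt
      have hI0 : I < 0 := hIlt.trans hIl0
      have := alphaFn_strictAnti (Set.mem_Iio.2 hI0) (Set.mem_Iio.2 hIl0) hIlt
      rwa [hIlval] at this
    · rintro I ⟨hIlI, hI0⟩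
      have := alphaFn_strictAnti (Set.mem_Iio.2 hIl0) (Set.mem_Iio.2 hI0) hIlI
      rwa [hIlval] at this
  · intro h I hI
    exact lt_of_lt_of_le (alphaFn_lt_exp hI) h
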